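/- With the notation of the geometric interpolation setup, suppose there exists a point x* ∈ Ω such that ‖P‖_Ω = Σ_{j=1}^d |λ_j(x*)| and exactly one of the numbers λ_1(x*),...,λ_d(x*) is negative (a '1-point'). Then the right-hand inequality ξ(T(Ω); S) ≤ (d/2)(‖P‖_Ω − 1) + 1 holds with equality, where S is the (d−1)-simplex with vertices T(x^(j)). -/

import Mathlib

/-- The (solid) simplex with vertices `v`. -/
noncomputable def simplexHull {n : ℕ} (v : Fin (n+1) → (Fin n → ℝ)) : Set (Fin n → ℝ) :=
  convexHull ℝ (Set.range v)

/-- The homothetic copy `σS` of the simplex with vertices `v`, with ratio `σ`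
about the centroid. -/
noncomputable def scaledSimplex {n : ℕ} (v : Fin (n+1) → (Fin n → ℝ)) (σ : ℝ) :
    Set (Fin n → ℝ) :=
  AffineMap.homothety (Finset.univ.centroid ℝ v) σ '' simplexHull v

/-- The absorption coefficient `ξ(Ω; S)` of `Ω` by the simplex with vertices `v`. -/
noncomputable def absCoef {n : ℕ} (Ω : Set (Fin n → ℝ)) (v : Fin (n+1) → (Fin n → ℝ)) : ℝ :=
  sInf {σ : ℝ | 1 ≤ σ ∧ Ω ⊆ scaledSimplex v σ}


/-- A function `ℝ^n → ℝ` is a monomial if it has the form `x ↦ ∏ xᵢ^{αᵢ}`. -/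
def IsMonomial {n : ℕ} (φ : (Fin n → ℝ) → ℝ) : Prop :=
  ∃ α : Fin n → ℕ, ∀ x, φ x = ∏ i, x i ^ α i



section Aux

lemma mem_simplexHull_iff {n : ℕ} (v : Fin (n+1) → (Fin n → ℝ)) (y : Fin n → ℝ) :
    y ∈ simplexHull v ↔ ∃ w : Fin (n+1) → ℝ,
      (∀ i, 0 ≤ w i) ∧ ∑ i, w i = 1 ∧ ∑ i, w i • v i = y := by
  rw [simplexHull, convexHull_range_eq_exists_affineCombination]
  constructor
  · rintro ⟨s, w, hw0, hw1, rfl⟩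
    refine ⟨(s : Set (Fin (n+1))).indicator w, fun i => ?_, ?_, ?_⟩
    · by_cases hi : i ∈ s
      · rw [Set.indicator_of_mem (by exact_mod_cast hi)]; exact hw0 i hi
      · rw [Set.indicator_of_notMem (by exact_mod_cast hi)]
    · rw [← Finset.sum_indicator_subset w s.subset_univ] at hw1; exact hw1
    · rw [Finset.affineCombination_indicator_subset w v s.subset_univ,
        Finset.univ.affineCombination_eq_linear_combination v _
          (by rw [← Finset.sum_indicator_subset w s.subset_univ] at hw1; exact hw1)]
  · rintro ⟨w, hw0, hw1, rfl⟩
    exact ⟨Finset.univ, w, fun i _ => hw0 i, hw1,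
      Finset.univ.affineCombination_eq_linear_combination v w hw1⟩

lemma centroid_eq {n : ℕ} (v : Fin (n+1) → (Fin n → ℝ)) :
    Finset.univ.centroid ℝ v = ∑ i, (((n:ℝ)+1)⁻¹) • v i := by
  rw [Finset.centroid_def,
    Finset.univ.affineCombination_eq_linear_combination v _
      (Finset.univ.sum_centroidWeights_eq_one_of_nonempty ℝ Finset.univ_nonempty)]
  simp [Finset.centroidWeights]

lemma mem_scaled_iff {n : ℕ} (v : Fin (n+1) → (Fin n → ℝ))
    (hv : AffineIndependent ℝ v) {σ : ℝ} (hσ : 0 < σ)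
    (b : Fin (n+1) → ℝ) (hb : ∑ i, b i = 1) :
    (∑ j, b j • v j) ∈ scaledSimplex v σ ↔ ∀ j, (1 - σ)/((n:ℝ)+1) ≤ b j := by
  have hcard : ((n:ℝ)+1) > 0 := by positivity
  have key : ∀ w : Fin (n+1) → ℝ,
      AffineMap.homothety (Finset.univ.centroid ℝ v) σ (∑ i, w i • v i)
        = ∑ i, (σ * w i + (1-σ)/((n:ℝ)+1)) • v i := by
    intro w
    rw [AffineMap.homothety_apply, centroid_eq]
    simp only [vsub_eq_sub, vadd_eq_add, smul_sub, Finset.smul_sum, smul_smul]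
    rw [← Finset.sum_sub_distrib, ← Finset.sum_add_distrib]
    refine Finset.sum_congr rfl fun i _ => ?_
    rw [← sub_smul, ← add_smul]
    congr 1
    field_simp
    ring
  constructor
  · rintro ⟨y, hy, hmap⟩ j
    rw [mem_simplexHull_iff] at hy
    obtain ⟨w, hw0, hw1, rfl⟩ := hy
    rw [key] at hmap
    have heq : ∀ i, σ * w i + (1-σ)/((n:ℝ)+1) = b i := by
      have hz := hv.eq_zero_of_sum_eq_zero (s := Finset.univ)
        (w := fun i => (σ * w i + (1-σ)/((n:ℝ)+1)) - b i) ?_ ?_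
      · intro i
        have := hz i (Finset.mem_univ i); linarith
      · rw [Finset.sum_sub_distrib, Finset.sum_add_distrib, ← Finset.mul_sum, hw1, hb]
        rw [Finset.sum_const, Finset.card_univ, Fintype.card_fin, nsmul_eq_mul]
        push_cast
        field_simp
        ring
      · simp only [sub_smul, Finset.sum_sub_distrib, hmap, sub_self]
    have := heq j
    nlinarith [hw0 j]
  · intro hj
    refine ⟨∑ i, ((b i - (1-σ)/((n:ℝ)+1))/σ) • v i, ?_, ?_⟩
    · rw [mem_simplexHull_iff]
      refine ⟨_, fun i => ?_, ?_, rfl⟩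
      · have := hj i
        have : 0 ≤ b i - (1 - σ) / ((n:ℝ)+1) := by linarith
        positivity
      · rw [← Finset.sum_div, Finset.sum_sub_distrib, hb, Finset.sum_const,
          Finset.card_univ, Fintype.card_fin, nsmul_eq_mul]
        push_cast
        field_simp
        ring
    · rw [key]
      refine Finset.sum_congr rfl fun i _ => ?_
      congr 1
      field_simp
      ring

lemma vanish_of_span {n m : ℕ} (φ : Fin (m+1) → ((Fin n → ℝ) → ℝ))
    (nodes : Fin (m+1) → (Fin n → ℝ))
    (hadm : (Matrix.of fun i j => φ i (nodes j)).det ≠ 0)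
    (f : (Fin n → ℝ) → ℝ) (hf : f ∈ Submodule.span ℝ (Set.range φ))
    (hz : ∀ k, f (nodes k) = 0) : f = 0 := by
  obtain ⟨c, hc⟩ := (Submodule.mem_span_range_iff_exists_fun ℝ).mp hf
  have hM : (Matrix.of fun i j => φ i (nodes j)).transpose.mulVec c = 0 := by
    funext k
    have := congrFun hc (nodes k)
    simp only [Finset.sum_apply, Pi.smul_apply, smul_eq_mul] at this
    simp only [Matrix.mulVec, dotProduct, Matrix.transpose_apply, Matrix.of_apply,
      Pi.zero_apply]
    rw [hz k] at this
    rw [← this]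
    exact Finset.sum_congr rfl fun i _ => mul_comm _ _
  have hc0 : c = 0 := Matrix.eq_zero_of_mulVec_eq_zero (by rwa [Matrix.det_transpose]) hM
  rw [← hc, hc0]
  simp

lemma cont_of_span {n m : ℕ} (φ : Fin (m+1) → ((Fin n → ℝ) → ℝ))
    (hmono : ∀ i, IsMonomial (φ i))
    (f : (Fin n → ℝ) → ℝ) (hf : f ∈ Submodule.span ℝ (Set.range φ)) :
    Continuous f := by
  induction hf using Submodule.span_induction with
  | mem g hg =>
    obtain ⟨i, rfl⟩ := hg
    obtain ⟨α, hα⟩ := hmono i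
    have : φ i = fun x => ∏ j, x j ^ α j := funext hα
    rw [this]
    exact continuous_finset_prod _ fun j _ => (continuous_apply j).pow _
  | zero => exact continuous_const
  | add g h _ _ hg hh => exact hg.add hh
  | smul a g _ hg => exact hg.const_smul a

end Aux

theorem absCoef_eq_of_one_point {n m : ℕ} (hn : n ≤ m)
    (Ω : Set (Fin n → ℝ)) (hΩ : IsCompact Ω)
    (φ : Fin (m+1) → ((Fin n → ℝ) → ℝ))
    (hmono : ∀ i, IsMonomial (φ i))
    (hind : LinearIndependent ℝ φ)
    (h1 : ∀ x, φ 0 x = 1)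
    (hcoord : ∀ (j : Fin n) (x : Fin n → ℝ),
      φ ⟨(j : ℕ) + 1, by have := j.isLt; omega⟩ x = x j)
    (nodes : Fin (m+1) → (Fin n → ℝ)) (hnodes : ∀ j, nodes j ∈ Ω)
    (hadm : (Matrix.of fun i j => φ i (nodes j)).det ≠ 0)
    (lam : Fin (m+1) → ((Fin n → ℝ) → ℝ))
    (hspan : ∀ j, lam j ∈ Submodule.span ℝ (Set.range φ))
    (hdelta : ∀ j k, lam j (nodes k) = if j = k then 1 else 0)
    (T : (Fin n → ℝ) → (Fin m → ℝ)) (hT : ∀ x i, T x i = φ i.succ x)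
    (hSimp : AffineIndependent ℝ (fun j => T (nodes j)))
    (normP : ℝ)
    (hnorm : normP = sSup {s : ℝ | ∃ x ∈ Ω, s = ∑ j, |lam j x|})
    (h1pt : ∃ x ∈ Ω, normP = ∑ j, |lam j x| ∧ (∃! j, lam j x < 0)) :
    absCoef (T '' Ω) (fun j => T (nodes j)) = ((m : ℝ) + 1)/2 * (normP - 1) + 1 := by
  classical
  have hm1 : (0:ℝ) < (m:ℝ) + 1 := by positivity
  -- sum of lagrange polynomials is 1
  have hsum1 : ∀ x, ∑ j, lam j x = 1 := by
    intro x
    have h0 : ((∑ j, lam j) - φ 0) = 0 := by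
      apply vanish_of_span φ nodes hadm
      · exact sub_mem (Submodule.sum_mem _ fun j _ => hspan j)
          (Submodule.subset_span ⟨0, rfl⟩)
      · intro k
        simp [Finset.sum_apply, hdelta, h1]
    have := congrFun h0 x
    simp only [Pi.sub_apply, Finset.sum_apply, Pi.zero_apply, h1 x, sub_eq_zero] at this
    exact this
  -- representation of T x as affine combination with weights lam j x
  have hrep : ∀ (x : Fin n → ℝ) (i : Fin m),
      φ i.succ x = ∑ j, lam j x * φ i.succ (nodes j) := by
    intro x i
    have h0 : ((∑ j, φ i.succ (nodes j) • lam j) - φ i.succ) = 0 := by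
      apply vanish_of_span φ nodes hadm
      · exact sub_mem (Submodule.sum_mem _ fun j _ =>
          Submodule.smul_mem _ _ (hspan j)) (Submodule.subset_span ⟨i.succ, rfl⟩)
      · intro k
        simp [Finset.sum_apply, hdelta]
    have := congrFun h0 x
    simp only [Pi.sub_apply, Finset.sum_apply, Pi.smul_apply, smul_eq_mul,
      Pi.zero_apply, sub_eq_zero] at this
    rw [← this]
    exact Finset.sum_congr rfl fun j _ => mul_comm _ _
  have hTx : ∀ x, T x = ∑ j, lam j x • T (nodes j) := by
    intro x
    funext i
    rw [Finset.sum_apply]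
    simp only [Pi.smul_apply, smul_eq_mul, hT]
    exact hrep x i
  -- upper bound for the lebesgue function
  have hub : ∀ x ∈ Ω, ∑ j, |lam j x| ≤ normP := by
    intro x hx
    rw [hnorm]
    have hgc : Continuous fun y => ∑ j, |lam j y| :=
      continuous_finset_sum _ fun j _ => (cont_of_span φ hmono _ (hspan j)).abs
    have himg : {s : ℝ | ∃ x ∈ Ω, s = ∑ j, |lam j x|} = (fun y => ∑ j, |lam j y|) '' Ω := by
      ext s; constructor
      · rintro ⟨y, hy, rfl⟩; exact ⟨y, hy, rfl⟩
      · rintro ⟨y, hy, rfl⟩; exact ⟨y, hy, rfl⟩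
    apply le_csSup
    · rw [himg]; exact (hΩ.image hgc).bddAbove
    · exact ⟨x, hx, rfl⟩
  obtain ⟨xs, hxs, hPeq, k, hkneg, hkuniq⟩ := h1pt
  have hnonneg : ∀ j, j ≠ k → 0 ≤ lam j xs := fun j hj =>
    le_of_not_gt fun h => hj (hkuniq j h)
  -- value of the negative lagrange polynomial at the 1-point
  have hlamk : lam k xs = (1 - normP)/2 := by
    have hsub : ∑ j, (|lam j xs| - lam j xs) = -2 * lam k xs := by
      rw [Finset.sum_eq_single k]
      · rw [abs_of_neg hkneg]; ring
      · intro j _ hj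
        rw [abs_of_nonneg (hnonneg j hj), sub_self]
      · intro h; exact absurd (Finset.mem_univ k) h
    rw [Finset.sum_sub_distrib, hsum1 xs, ← hPeq] at hsub
    linarith
  set μ : ℝ := (normP - 1)/2 with hμ
  have hμpos : 0 < μ := by
    have := hkneg
    rw [hlamk] at this
    rw [hμ]; linarith
  -- uniform bound : -(lam j x) ≤ μ
  have hbound : ∀ x ∈ Ω, ∀ j, -(lam j x) ≤ μ := by
    intro x hx j
    rcases le_or_gt 0 (lam j x) with h | h
    · linarith
    · have herase : lam j x + ∑ i ∈ Finset.univ.erase j, lam i x = 1 := by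
        rw [Finset.add_sum_erase _ (fun i => lam i x) (Finset.mem_univ j)]; exact hsum1 x
      have habs : |∑ i ∈ Finset.univ.erase j, lam i x|
          ≤ ∑ i ∈ Finset.univ.erase j, |lam i x| := Finset.abs_sum_le_sum_abs _ _
      have h1' : (1 : ℝ) - lam j x ≤ ∑ i ∈ Finset.univ.erase j, |lam i x| := by
        rw [← abs_of_pos (a := 1 - lam j x) (by linarith)]
        calc |1 - lam j x| = |∑ i ∈ Finset.univ.erase j, lam i x| := by rw [← herase]; ring_nf
          _ ≤ _ := habs
      have h2' : |lam j x| + ∑ i ∈ Finset.univ.erase j, |lam i x| = ∑ i, |lam i x| :=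
        Finset.add_sum_erase _ (fun i => |lam i x|) (Finset.mem_univ j)
      have := hub x hx
      rw [abs_of_neg h] at h2'
      rw [hμ]; linarith
  -- the admissible set of dilation coefficients is exactly [σ₀, ∞)
  have hset : {σ : ℝ | 1 ≤ σ ∧ T '' Ω ⊆ scaledSimplex (fun j => T (nodes j)) σ}
      = Set.Ici (((m:ℝ)+1) * μ + 1) := by
    ext σ
    simp only [Set.mem_setOf_eq, Set.mem_Ici]
    constructor
    · rintro ⟨hσ1, hsub⟩
      have hσpos : (0:ℝ) < σ := lt_of_lt_of_le one_pos hσ1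
      have hmem : T xs ∈ scaledSimplex (fun j => T (nodes j)) σ := hsub ⟨xs, hxs, rfl⟩
      rw [hTx xs] at hmem
      have := ((mem_scaled_iff (fun j => T (nodes j)) hSimp hσpos
        (fun j => lam j xs) (hsum1 xs)).mp hmem) k
      rw [hlamk] at this
      rw [div_le_iff₀ hm1] at this
      have hμ' : (1 - normP)/2 = -μ := by rw [hμ]; ring
      rw [hμ'] at this
      nlinarith
    · intro hσ
      have hσ1 : (1:ℝ) ≤ σ := by nlinarith
      have hσpos : (0:ℝ) < σ := lt_of_lt_of_le one_pos hσ1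
      refine ⟨hσ1, ?_⟩
      rintro z ⟨x, hx, rfl⟩
      rw [hTx x]
      refine (mem_scaled_iff (fun j => T (nodes j)) hSimp hσpos
        (fun j => lam j x) (hsum1 x)).mpr fun j => ?_
      have hb := hbound x hx j
      rw [div_le_iff₀ hm1]
      nlinarith
  rw [absCoef, hset, csInf_Ici, hμ]
  ring
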